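/- For any partition of a finite index set $I$ with positive weights $v_i$ into groups $G_1, \dots, G_K$, the cost $\sum_k (\sum_{i \in G_k} v_i)^2$ is minimized, over all assignments of items to $K$ groups, by some assignment in which no single item can move to another group and strictly decrease the cost; moreover for any locally optimal assignment $d^*$ (no improving single-item move for the item's own contribution $v_i \sum_{j \in G_{k(i)}} v_j$) and globally optimal assignment $\hat d$, $\sum_k q_k(d^*)^2 \le \frac{3+\sqrt5}{2} \sum_k q_k(\hat d)^2$, where $q_k(d)$ is the total weight assigned to group $k$ in $d$. -/

import Mathlib

section aux

variable {I : Type} [Fintype I] [DecidableEq I] {K : ℕ}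

/-- Auxiliary: group-by-fibers identity for sums of the form `∑ i, v i * F (d i)`. -/
private lemma fiber_sum (v : I → ℝ) (d : I → Fin K) (F : Fin K → ℝ) :
    ∑ i, v i * F (d i)
      = ∑ k, (∑ i ∈ Finset.univ.filter (fun i => d i = k), v i) * F k := by
  rw [← Finset.sum_fiberwise Finset.univ d (fun i => v i * F (d i))]
  refine Finset.sum_congr rfl fun k _ => ?_
  rw [Finset.sum_mul]
  refine Finset.sum_congr rfl fun i hi => ?_
  rw [Finset.mem_filter] at hi
  rw [hi.2]

end aux

/-- Single-resource specialization: a locally optimal assignment of weighted items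
to `K` groups exists among global minimizers of the sum of squared group weights,
and any locally optimal assignment has cost at most `(3+√5)/2` times the optimum. -/
theorem stmt_18 (I : Type) [Fintype I] [DecidableEq I]
    (v : I → ℝ) (hv : ∀ i, 0 < v i) (K : ℕ) (hK : 0 < K) :
    let Q : Fin K → (I → Fin K) → ℝ :=
      fun k d => ∑ i ∈ Finset.univ.filter (fun i => d i = k), v i
    let cost : (I → Fin K) → ℝ := fun d => ∑ k, (Q k d) ^ 2
    (∃ d : I → Fin K, (∀ d', cost d ≤ cost d') ∧
      ∀ (i : I) (k' : Fin K), v i * Q (d i) d ≤ v i * (Q k' d + v i)) ∧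
    (∀ dstar : I → Fin K,
      (∀ (i : I) (k' : Fin K), v i * Q (dstar i) dstar ≤ v i * (Q k' dstar + v i)) →
      ∀ dhat : I → Fin K, (∀ d', cost dhat ≤ cost d') →
        cost dstar ≤ (3 + Real.sqrt 5) / 2 * cost dhat) := by
  intro Q cost
  have hQnn : ∀ (k : Fin K) (d : I → Fin K), 0 ≤ Q k d := by
    intro k d
    exact Finset.sum_nonneg fun i _ => (hv i).le
  have hcostnn : ∀ d, 0 ≤ cost d := fun d => Finset.sum_nonneg fun k _ => sq_nonneg _
  haveI : Nonempty (Fin K) := ⟨⟨0, hK⟩⟩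
  -- Q as a full sum with indicator
  have hQind : ∀ (k : Fin K) (d : I → Fin K),
      Q k d = ∑ i, (if d i = k then v i else 0) := by
    intro k d
    exact Finset.sum_filter _ _
  -- key: any global minimizer is locally optimal
  have hglob_loc : ∀ d : I → Fin K, (∀ d', cost d ≤ cost d') →
      ∀ (i : I) (k' : Fin K), v i * Q (d i) d ≤ v i * (Q k' d + v i) := by
    intro d hmin i k'
    by_cases hkk : k' = d i
    · subst hkk
      have : Q (d i) d ≤ Q (d i) d + v i := le_add_of_nonneg_right (hv i).le
      exact mul_le_mul_of_nonneg_left this (hv i).le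
    · set d' := Function.update d i k' with hd'
      -- compute Q under the update
      have hQupd : ∀ k : Fin K, Q k d' = Q k d +
          ((if k' = k then v i else 0) - (if d i = k then v i else 0)) := by
        intro k
        rw [hQind k d', hQind k d]
        have hpt : (∑ j, if d' j = k then v j else 0)
            = ∑ j, ((if d j = k then v j else 0)
              + (if j = i then ((if k' = k then v i else 0)
                  - (if d i = k then v i else 0)) else 0)) := by
          refine Finset.sum_congr rfl fun j _ => ?_
          by_cases hj : j = i
          · subst hj
            simp [hd', Function.update_self]
          · simp [hd', Function.update_of_ne hj, hj]
        rw [hpt, Finset.sum_add_distrib, Finset.sum_ite_eq' Finset.univ i]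
        simp
      have hco : cost d' = cost d + (2 * v i * Q k' d + v i ^ 2)
          + (v i ^ 2 - 2 * v i * Q (d i) d) := by
        show (∑ k, (Q k d') ^ 2) = _
        have : ∀ k : Fin K, (Q k d') ^ 2 = (Q k d) ^ 2
            + (if k' = k then 2 * v i * Q k' d + v i ^ 2 else 0)
            + (if d i = k then v i ^ 2 - 2 * v i * Q (d i) d else 0) := by
          intro k
          rw [hQupd k]
          by_cases h1 : k' = k <;> by_cases h2 : d i = k
          · exact absurd (h1.trans h2.symm) hkk
          · subst h1; simp [h2]; ring
          · subst h2; simp [h1]; ring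
          · simp [h1, h2]
        simp_rw [this, Finset.sum_add_distrib, Finset.sum_ite_eq, Finset.mem_univ,
          if_true]
        rfl
      have h0 : cost d ≤ cost d' := hmin d'
      rw [hco] at h0
      have : Q (d i) d ≤ Q k' d + v i := by nlinarith [hv i]
      exact mul_le_mul_of_nonneg_left this (hv i).le
  constructor
  · obtain ⟨d, hd⟩ := Finite.exists_min cost
    exact ⟨d, hd, hglob_loc d hd⟩
  · intro dstar hloc dhat hmin
    set A := cost dstar with hA
    set B := cost dhat with hB
    set S := ∑ k, Q k dhat * Q k dstar with hSdef
    -- cost dstar = ∑ i, v i * Q (dstar i) dstar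
    have h1 : A = ∑ i, v i * Q (dstar i) dstar := by
      rw [hA]
      show (∑ k, (Q k dstar) ^ 2) = _
      rw [fiber_sum v dstar (fun k => Q k dstar)]
      refine (Finset.sum_congr rfl fun k _ => ?_).symm
      rw [sq]
    have h2 : ∑ i, v i * (Q (dhat i) dstar + v i) = S + ∑ i, v i * v i := by
      have := fiber_sum v dhat (fun k => Q k dstar)
      simp_rw [mul_add, Finset.sum_add_distrib, this]
      rfl
    have h3 : A ≤ S + ∑ i, v i * v i := by
      rw [h1, ← h2]
      exact Finset.sum_le_sum fun i _ => hloc i (dhat i)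
    have h4 : (∑ i, v i * v i) ≤ B := by
      rw [hB]
      show _ ≤ ∑ k, (Q k dhat) ^ 2
      rw [← Finset.sum_fiberwise Finset.univ dhat (fun i => v i * v i)]
      refine Finset.sum_le_sum fun k _ => ?_
      rw [sq]
      have hle : ∀ i ∈ Finset.univ.filter (fun i => dhat i = k), v i ≤ Q k dhat :=
        fun i hi => Finset.single_le_sum (fun j _ => (hv j).le) hi
      calc ∑ i ∈ Finset.univ.filter (fun i => dhat i = k), v i * v i
          ≤ ∑ i ∈ Finset.univ.filter (fun i => dhat i = k), v i * Q k dhat :=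
            Finset.sum_le_sum fun i hi =>
              mul_le_mul_of_nonneg_left (hle i hi) (hv i).le
        _ = Q k dhat * Q k dhat := by rw [← Finset.sum_mul]
    have hAS : A ≤ S + B := h3.trans (by linarith)
    have hS0 : 0 ≤ S := Finset.sum_nonneg fun k _ => mul_nonneg (hQnn k dhat) (hQnn k dstar)
    have hCS : S ^ 2 ≤ B * A := by
      have := Finset.sum_mul_sq_le_sq_mul_sq Finset.univ (fun k => Q k dhat)
        (fun k => Q k dstar)
      exact this
    have hA0 : 0 ≤ A := hcostnn dstar
    have hB0 : 0 ≤ B := hcostnn dhat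
    have hs5 : Real.sqrt 5 ^ 2 = 5 := Real.sq_sqrt (by norm_num)
    have hs50 : 0 ≤ Real.sqrt 5 := Real.sqrt_nonneg 5
    -- from A ≤ S + B and S² ≤ A B deduce A ≤ φ² B
    by_cases hAB : A ≤ B
    · have : (1 : ℝ) ≤ (3 + Real.sqrt 5) / 2 := by nlinarith
      nlinarith
    · push_neg at hAB
      have hABpos : 0 ≤ A - B := by linarith
      have h5 : (A - B) ^ 2 ≤ B * A := by
        have : A - B ≤ S := by linarith
        nlinarith
      nlinarith [sq_nonneg (2 * A - (3 - Real.sqrt 5) * B), sq_nonneg (A - B),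
        mul_nonneg hB0 hs50, mul_nonneg hA0 hs50]
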